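/- arXiv:2506.21217 — 8 statements merged into one kernel-verified Lean document; each statement's English description precedes it below -/
import Mathlib

section
/- Let p be a prime, k a perfect field of characteristic p, W = W(k) its ring of p-typical Witt vectors, and σ : W → W the Witt-vector Frobenius (a bijective ring endomorphism since k is perfect). Fix natural numbers r ≥ 1 and w with w ≤ r. Let M_0, …, M_{r−1} be W-modules (indices taken modulo r) together with σ-semilinear maps F_i : M_i → M_{i+1} such that for every i ≠ 0 the map F_i is bijective, and such that p^w · x lies in the image F_0(M_0) for every x ∈ M_1. Define W-submodules Ñ_0 = M_0 and, for 1 ≤ i ≤ r−1, Ñ_i = (F_{i−1} ∘ ⋯ ∘ F_0)(M_0) + p^{max(w−i,0)} · M_i ⊆ M_i. Then for every i ∈ {0,…,r−1} (indices cyclic, Ñ_r = Ñ_0) one has F_i(Ñ_i) ⊆ Ñ_{i+1} and p · Ñ_{i+1} ⊆ F_i(Ñ_i); that is, p·Ñ ⊆ F(Ñ) ⊆ Ñ, so Ñ equipped with the restriction of F is a graded Dieudonné module. -/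
open Pointwise

/-- The Witt-vector Frobenius is surjective over a perfect field, so semilinear
`Submodule.map` is available. -/
instance wittFrobeniusSurjective (p : ℕ) [Fact p.Prime] (k : Type*) [Field k]
    [CharP k p] [PerfectRing k p] :
    RingHomSurjective (WittVector.frobenius : WittVector p k →+* WittVector p k) :=
  ⟨(WittVector.frobenius_bijective p k).surjective⟩

/-- Membership in the pointwise scalar multiple of a submodule. -/
lemma mem_psmul_iff {R M : Type*} [CommRing R] [AddCommGroup M] [Module R M]
    (a : R) (S : Submodule R M) (x : M) : x ∈ a • S ↔ ∃ y ∈ S, a • y = x := by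
  rw [← SetLike.mem_coe, Submodule.coe_pointwise_smul, Set.mem_smul_set]
  simp

/-- Splitting a power scalar multiplication from the right. -/
lemma psmul_split {R M : Type*} [CommRing R] [AddCommGroup M] [Module R M]
    (c : R) (a b : ℕ) (h : b ≤ a) (x : M) :
    c ^ a • x = c ^ (a - b) • (c ^ b • x) := by
  rw [smul_smul, ← pow_add]
  congr 2
  omega

/-- Absorbing one extra scalar factor. -/
lemma smul_pow_succ {R M : Type*} [CommRing R] [AddCommGroup M] [Module R M]
    (c : R) (e : ℕ) (x : M) : c • c ^ e • x = c ^ (e + 1) • x := by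
  rw [smul_smul, ← pow_succ']

/-- **Characteristic-p Dieudonnéfication.**
Let `k` be a perfect field of characteristic `p`, `W = W(k)` its Witt vectors with
Frobenius `σ`, `r ≥ 1`, `w ≤ r`.  Given `W`-modules `M i` (`i ∈ ℤ/r`) with
`σ`-semilinear maps `F i : M i → M (i+1)` that are bijective for `i ≠ 0` and satisfy
`p^w • M 1 ⊆ F 0 (M 0)`, define `Ñ 0 = M 0` and, for `1 ≤ i ≤ r-1`,
`Ñ i = (F (i-1) ∘ ⋯ ∘ F 0)(M 0) + p^(max (w-i) 0) • M i`.
Then for all `i` (cyclically): `F i (Ñ i) ⊆ Ñ (i+1)` and `p • Ñ (i+1) ⊆ F i (Ñ i)`,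
i.e. `Ñ` with the restriction of `F` is a graded Dieudonné module. -/
theorem char_p_dieudonnefication
    (p : ℕ) [Fact p.Prime]
    (k : Type*) [Field k] [CharP k p] [PerfectRing k p]
    (r w : ℕ) (hr : 1 ≤ r) (hw : w ≤ r)
    (M : ZMod r → Type*) [∀ i, AddCommGroup (M i)]
    [∀ i, Module (WittVector p k) (M i)]
    (F : ∀ i : ZMod r,
      M i →ₛₗ[(WittVector.frobenius : WittVector p k →+* WittVector p k)] M (i + 1))
    (hbij : ∀ i : ZMod r, i ≠ 0 → Function.Bijective (F i))
    (hdiv : ∀ x : M ((0 : ZMod r) + 1), (p : WittVector p k) ^ w • x ∈ Submodule.map (F 0) ⊤)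
    -- `P i` is the image of `M 0` under the composite `F (i-1) ∘ ⋯ ∘ F 0`
    (P : ∀ i : ZMod r, Submodule (WittVector p k) (M i))
    (hP0 : P 0 = ⊤)
    (hPsucc : ∀ i : ℕ, i + 1 ≤ r - 1 →
      P ((i : ZMod r) + 1) = Submodule.map (F (i : ZMod r)) (P (i : ZMod r)))
    -- the graded Dieudonné module `Ñ`
    (Nt : ∀ i : ZMod r, Submodule (WittVector p k) (M i))
    (hN0 : Nt 0 = ⊤)
    (hNi : ∀ i : ℕ, 1 ≤ i → i ≤ r - 1 →
      Nt (i : ZMod r) = P (i : ZMod r) ⊔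
        (p : WittVector p k) ^ (w - i) • (⊤ : Submodule (WittVector p k) (M (i : ZMod r)))) :
    ∀ i : ZMod r,
      Submodule.map (F i) (Nt i) ≤ Nt (i + 1) ∧
      (p : WittVector p k) • Nt (i + 1) ≤ Submodule.map (F i) (Nt i) := by
  intro i
  haveI : NeZero r := ⟨by omega⟩
  set W := WittVector p k with hW
  have hσp : (WittVector.frobenius : W →+* W) (p : W) = (p : W) := map_natCast _ p
  have hFp : ∀ (j : ZMod r) (a : ℕ) (x : M j),
      F j ((p : W) ^ a • x) = (p : W) ^ a • F j x := by
    intro j a x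
    rw [LinearMap.map_smulₛₗ, map_pow, hσp]
  obtain ⟨n, hn, rfl⟩ : ∃ n : ℕ, n < r ∧ (n : ZMod r) = i :=
    ⟨i.val, ZMod.val_lt i, by rw [ZMod.natCast_val, ZMod.cast_id]⟩
  rcases eq_or_lt_of_le (show n + 1 ≤ r from hn) with hnr | hnr
  · -- last index: n + 1 = r, so i + 1 = 0
    have hi1 : ((n : ZMod r) + 1) = 0 := by
      have h : ((n : ZMod r) + 1) = ((n + 1 : ℕ) : ZMod r) := by push_cast; ring
      rw [h, show n + 1 = r by omega, ZMod.natCast_self]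
    have hN1 : Nt ((n : ZMod r) + 1) = ⊤ := by rw [hi1]; exact hN0
    refine ⟨by rw [hN1]; exact le_top, ?_⟩
    rw [hN1]
    by_cases hn0 : n = 0
    · -- r = 1
      subst hn0
      rw [show ((0 : ℕ) : ZMod r) = 0 from Nat.cast_zero, hN0]
      intro x hx
      obtain ⟨s, -, rfl⟩ := (mem_psmul_iff _ _ _).mp hx
      have hw1 : w ≤ 1 := by omega
      have h1 : (p : W) • s = (p : W) ^ (1 - w) • ((p : W) ^ w • s) := by
        rw [smul_smul, ← pow_add, show 1 - w + w = 1 by omega, pow_one]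
      rw [h1]
      exact Submodule.smul_mem _ _ (hdiv s)
    · -- n = r - 1 ≥ 1
      have hne : (n : ZMod r) ≠ 0 := by
        intro h
        have h2 := ZMod.val_cast_of_lt hn
        rw [h, ZMod.val_zero] at h2
        exact hn0 h2.symm
      have hsurj := (hbij _ hne).surjective
      have hNtn := hNi n (by omega) (by omega)
      intro x hx
      obtain ⟨s, -, rfl⟩ := (mem_psmul_iff _ _ _).mp hx
      obtain ⟨y, hy⟩ := hsurj s
      refine Submodule.mem_map.mpr ⟨(p : W) • y, ?_, ?_⟩
      · rw [hNtn]
        apply Submodule.mem_sup_right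
        rw [mem_psmul_iff]
        refine ⟨(p : W) ^ (1 - (w - n)) • y, Submodule.mem_top, ?_⟩
        rw [smul_smul, ← pow_add, show w - n + (1 - (w - n)) = 1 by omega, pow_one]
      · rw [show (p : W) • y = (p : W) ^ 1 • y by rw [pow_one], hFp, pow_one, hy]
  · -- n + 1 < r
    have hcast : ((n + 1 : ℕ) : ZMod r) = (n : ZMod r) + 1 := by push_cast; ring
    have hNt1 : Nt ((n : ZMod r) + 1) = P ((n : ZMod r) + 1) ⊔
        (p : W) ^ (w - (n + 1)) • (⊤ : Submodule W (M ((n : ZMod r) + 1))) := by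
      have h := hNi (n + 1) (by omega) (by omega)
      rw [hcast] at h
      exact h
    by_cases hn0 : n = 0
    · subst hn0
      rw [show ((0 : ℕ) : ZMod r) = 0 from Nat.cast_zero] at hNt1 ⊢
      have hP1 : P ((0 : ZMod r) + 1) = Submodule.map (F 0) (P 0) := by
        have h := hPsucc 0 (by omega)
        rw [show ((0 : ℕ) : ZMod r) = 0 from Nat.cast_zero] at h
        exact h
      constructor
      · rw [hN0, hNt1]
        refine le_trans ?_ le_sup_left
        rw [hP1, hP0]
      · rw [hN0, hNt1]
        intro x hx
        obtain ⟨s, hs, rfl⟩ := (mem_psmul_iff _ _ _).mp hx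
        obtain ⟨a, ha, b, hb, rfl⟩ := Submodule.mem_sup.mp hs
        rw [smul_add]
        apply Submodule.add_mem
        · rw [hP1, hP0] at ha
          exact Submodule.smul_mem _ _ ha
        · obtain ⟨u, -, rfl⟩ := (mem_psmul_iff _ _ _).mp hb
          rw [smul_pow_succ, psmul_split (p : W) (w - (0 + 1) + 1) w (by omega)]
          exact Submodule.smul_mem _ _ (hdiv u)
    · -- middle index: 1 ≤ n, n + 1 ≤ r - 1
      have hne : (n : ZMod r) ≠ 0 := by
        intro h
        have h2 := ZMod.val_cast_of_lt hn
        rw [h, ZMod.val_zero] at h2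
        exact hn0 h2.symm
      have hsurj := (hbij _ hne).surjective
      have hNtn := hNi n (by omega) (by omega)
      have hP1 := hPsucc n (by omega)
      constructor
      · rw [hNtn, hNt1]
        intro x hx
        obtain ⟨y, hy, rfl⟩ := Submodule.mem_map.mp hx
        obtain ⟨a, ha, b, hb, rfl⟩ := Submodule.mem_sup.mp hy
        rw [map_add]
        apply Submodule.add_mem
        · apply Submodule.mem_sup_left
          rw [hP1]
          exact Submodule.mem_map.mpr ⟨a, ha, rfl⟩
        · apply Submodule.mem_sup_right
          obtain ⟨u, -, rfl⟩ := (mem_psmul_iff _ _ _).mp hb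
          rw [hFp, mem_psmul_iff]
          refine ⟨(p : W) ^ (w - n - (w - (n + 1))) • F (n : ZMod r) u, Submodule.mem_top, ?_⟩
          rw [smul_smul, ← pow_add]
          congr 2
          omega
      · rw [hNtn, hNt1]
        intro x hx
        obtain ⟨s, hs, rfl⟩ := (mem_psmul_iff _ _ _).mp hx
        obtain ⟨a, ha, b, hb, rfl⟩ := Submodule.mem_sup.mp hs
        rw [smul_add]
        apply Submodule.add_mem
        · rw [hP1] at ha
          obtain ⟨a', ha', rfl⟩ := Submodule.mem_map.mp ha
          refine Submodule.mem_map.mpr ⟨(p : W) • a', ?_, ?_⟩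
          · exact Submodule.mem_sup_left (Submodule.smul_mem _ _ ha')
          · rw [show (p : W) • a' = (p : W) ^ 1 • a' by rw [pow_one], hFp, pow_one]
        · obtain ⟨u, -, rfl⟩ := (mem_psmul_iff _ _ _).mp hb
          obtain ⟨v, hv⟩ := hsurj u
          refine Submodule.mem_map.mpr ⟨(p : W) ^ (w - (n + 1) + 1) • v, ?_, ?_⟩
          · apply Submodule.mem_sup_right
            rw [mem_psmul_iff]
            refine ⟨(p : W) ^ (w - (n + 1) + 1 - (w - n)) • v, Submodule.mem_top, ?_⟩
            rw [smul_smul, ← pow_add]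
            congr 2
            omega
          · rw [hFp, hv, smul_pow_succ]
end

section
/- Let A be a commutative ring, σ : A → A a ring endomorphism, and d ∈ A. Fix natural numbers r ≥ 1 and w with w ≤ r. Let M_0, …, M_{r−1} be A-modules (indices taken modulo r) together with σ-semilinear maps F_i : M_i → M_{i+1} such that for every i ≠ 0 the module M_{i+1} is generated as an A-module by the image of F_i (this holds when the linearization of F_i is an isomorphism), and such that d^w · x lies in the A-submodule generated by F_0(M_0) for every x ∈ M_1. Let P_i ⊆ M_i denote the A-submodule generated by the image of M_0 under F_{i−1} ∘ ⋯ ∘ F_0 (with P_0 = M_0), and define Ñ_0 = M_0 and, for 1 ≤ i ≤ r−1, Ñ_i = P_i + σ^{i−1}(d)^{max(w−i,0)} · M_i ⊆ M_i. For a σ-semilinear map F and a submodule N, write ⟨F(N)⟩ for the A-submodule generated by the image F(N). Then for every i ∈ {0,…,r−1} (indices cyclic, Ñ_r = Ñ_0) one has ⟨F_i(Ñ_i)⟩ ⊆ Ñ_{i+1} and σ^i(d) · Ñ_{i+1} ⊆ ⟨F_i(Ñ_i)⟩, where σ^i denotes the i-th iterate of σ. -/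
open Pointwise

section Aux

variable {A : Type*} [CommRing A] (σ : A →+* A) {M M' : Type*}
  [AddCommGroup M] [AddCommGroup M'] [Module A M] [Module A M']

private lemma spanImageSup (F : M →ₛₗ[σ] M') (N N' : Submodule A M) :
    Submodule.span A (F '' ↑(N ⊔ N')) =
      Submodule.span A (F '' ↑N) ⊔ Submodule.span A (F '' ↑N') := by
  apply le_antisymm
  · rw [Submodule.span_le]
    rintro _ ⟨x, hx, rfl⟩
    obtain ⟨a, ha, b, hb, rfl⟩ := Submodule.mem_sup.mp hx
    rw [map_add]
    exact Submodule.add_mem _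
      (Submodule.mem_sup_left (Submodule.subset_span ⟨a, ha, rfl⟩))
      (Submodule.mem_sup_right (Submodule.subset_span ⟨b, hb, rfl⟩))
  · exact sup_le
      (Submodule.span_mono (Set.image_mono (SetLike.coe_subset_coe.mpr le_sup_left)))
      (Submodule.span_mono (Set.image_mono (SetLike.coe_subset_coe.mpr le_sup_right)))

private lemma imageSmulSet (F : M →ₛₗ[σ] M') (c : A) (s : Set M) :
    F '' (c • s) = σ c • (F '' s) := by
  ext y
  constructor
  · rintro ⟨_, ⟨x, hx, rfl⟩, rfl⟩
    exact ⟨F x, ⟨x, hx, rfl⟩, (F.map_smulₛₗ c x).symm⟩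
  · rintro ⟨_, ⟨x, hx, rfl⟩, rfl⟩
    exact ⟨c • x, ⟨x, hx, rfl⟩, F.map_smulₛₗ c x⟩

private lemma spanImageSmul (F : M →ₛₗ[σ] M') (c : A) (N : Submodule A M) :
    Submodule.span A (F '' ↑(c • N)) = σ c • Submodule.span A (F '' ↑N) := by
  rw [Submodule.coe_pointwise_smul, imageSmulSet, ← Submodule.smul_span]

private lemma smulLeSelf (c : A) (N : Submodule A M) : c • N ≤ N := by
  rintro _ ⟨z, hz, rfl⟩
  exact N.smul_mem c hz

private lemma smulPowLe (c : A) {a b : ℕ} (h : b ≤ a) (N : Submodule A M) :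
    c ^ a • N ≤ c ^ b • N := by
  obtain ⟨k, rfl⟩ := Nat.exists_eq_add_of_le h
  rw [pow_add, mul_smul]
  rintro _ ⟨y, hy, rfl⟩
  exact Submodule.smul_mem_pointwise_smul _ _ _ (smulLeSelf (c ^ k) N hy)

end Aux

set_option maxHeartbeats 1000000 in
/-- **Mixed-characteristic Dieudonnéfication.**
Let `A` be a commutative ring with endomorphism `σ` and `d ∈ A`, `r ≥ 1`, `w ≤ r`.
Given `A`-modules `M i` (`i ∈ ℤ/r`) with `σ`-semilinear maps `F i : M i → M (i+1)`
such that for `i ≠ 0` the module `M (i+1)` is generated by the image of `F i`, and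
`d^w • M 1` lies in the submodule generated by `F 0 (M 0)`, let `P i` be the
submodule generated by the image of `M 0` under `F (i-1) ∘ ⋯ ∘ F 0` and set
`Ñ 0 = M 0`, `Ñ i = P i + σ^(i-1)(d)^(max (w-i) 0) • M i` for `1 ≤ i ≤ r-1`.
Then for all `i` (cyclically): `⟨F i (Ñ i)⟩ ⊆ Ñ (i+1)` and
`σ^i(d) • Ñ (i+1) ⊆ ⟨F i (Ñ i)⟩`. -/
theorem mixed_char_dieudonnefication
    {A : Type*} [CommRing A] (σ : A →+* A) (d : A)
    (r w : ℕ) (hr : 1 ≤ r) (hw : w ≤ r)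
    (M : ZMod r → Type*) [∀ i, AddCommGroup (M i)] [∀ i, Module A (M i)]
    (F : ∀ i : ZMod r, M i →ₛₗ[σ] M (i + 1))
    (hgen : ∀ i : ZMod r, i ≠ 0 → Submodule.span A (Set.range (F i)) = ⊤)
    (hdiv : ∀ x : M ((0 : ZMod r) + 1),
      d ^ w • x ∈ Submodule.span A (Set.range (F 0)))
    -- `P i` is the submodule generated by the image of `M 0` under `F (i-1) ∘ ⋯ ∘ F 0`
    (P : ∀ i : ZMod r, Submodule A (M i))
    (hP0 : P 0 = ⊤)
    (hPsucc : ∀ i : ℕ, i + 1 ≤ r - 1 →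
      P ((i : ZMod r) + 1) =
        Submodule.span A (F (i : ZMod r) '' (P (i : ZMod r) : Set (M (i : ZMod r)))))
    -- the graded module `Ñ`
    (Nt : ∀ i : ZMod r, Submodule A (M i))
    (hN0 : Nt 0 = ⊤)
    (hNi : ∀ i : ℕ, 1 ≤ i → i ≤ r - 1 →
      Nt (i : ZMod r) = P (i : ZMod r) ⊔
        ((⇑σ)^[i - 1] d) ^ (w - i) • (⊤ : Submodule A (M (i : ZMod r)))) :
    ∀ i : ZMod r,
      Submodule.span A (F i '' (Nt i : Set (M i))) ≤ Nt (i + 1) ∧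
      ((⇑σ)^[i.val] d) • Nt (i + 1) ≤
        Submodule.span A (F i '' (Nt i : Set (M i))) := by
  haveI : NeZero r := ⟨by omega⟩
  intro i
  obtain ⟨n, hn, rfl⟩ : ∃ n : ℕ, n < r ∧ (n : ZMod r) = i :=
    ⟨i.val, i.val_lt, ZMod.natCast_zmod_val i⟩
  have hval : ((n : ZMod r)).val = n := ZMod.val_cast_of_lt hn
  rw [hval]
  by_cases hn0 : n = 0
  · subst hn0
    rw [Nat.cast_zero, Function.iterate_zero_apply]
    by_cases hr1 : r = 1
    · subst hr1
      have h01 : (0 : ZMod 1) + 1 = 0 := by decide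
      have htop : Nt ((0 : ZMod 1) + 1) = ⊤ := by rw [h01, hN0]
      rw [htop, hN0, Submodule.top_coe, Set.image_univ]
      refine ⟨le_top, ?_⟩
      calc d • (⊤ : Submodule A (M ((0 : ZMod 1) + 1))) = d ^ 1 • ⊤ := by rw [pow_one]
        _ ≤ d ^ w • ⊤ := smulPowLe d (by omega) ⊤
        _ ≤ Submodule.span A (Set.range (F 0)) := by
            rintro _ ⟨x, -, rfl⟩
            exact hdiv x
    · -- r ≥ 2
      have hP1 := hPsucc 0 (by omega)
      rw [Nat.cast_zero, hP0, Submodule.top_coe, Set.image_univ] at hP1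
      have h2 := hNi 1 le_rfl (by omega)
      rw [Nat.cast_one, ← zero_add (1 : ZMod r), show (1 : ℕ) - 1 = 0 from rfl,
        Function.iterate_zero_apply] at h2
      rw [hN0, Submodule.top_coe, Set.image_univ, h2, hP1]
      constructor
      · exact le_sup_left
      · rw [Submodule.smul_sup']
        apply sup_le
        · exact smulLeSelf d _
        · calc d • d ^ (w - 1) • (⊤ : Submodule A (M ((0:ZMod r) + 1)))
              = d ^ (w - 1 + 1) • ⊤ := by rw [← mul_smul, ← pow_succ']
            _ ≤ d ^ w • ⊤ := smulPowLe d (by omega) ⊤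
            _ ≤ Submodule.span A (Set.range (F 0)) := by
                rintro _ ⟨x, -, rfl⟩
                exact hdiv x
  · -- n ≥ 1, so r ≥ 2
    have hne : (n : ZMod r) ≠ 0 := by
      intro h
      apply hn0
      rw [← hval, h, ZMod.val_zero]
    have h1 := hNi n (by omega) (by omega)
    have hcast : ((n + 1 : ℕ) : ZMod r) = (n : ZMod r) + 1 := by push_cast; ring
    by_cases hlast : n = r - 1
    · -- last index: target is Nt 0 = ⊤
      have h01 : (n : ZMod r) + 1 = 0 := by
        rw [← hcast, show n + 1 = r from by omega, ZMod.natCast_self]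
      have htop : Nt ((n : ZMod r) + 1) = ⊤ := by rw [h01, hN0]
      rw [htop]
      refine ⟨le_top, ?_⟩
      have hkey : Submodule.span A (F (n : ZMod r) ''
          ↑((((⇑σ)^[n - 1] d) ^ (w - n)) • (⊤ : Submodule A (M (n : ZMod r)))))
          = ((⇑σ)^[n] d) ^ (w - n) • (⊤ : Submodule A (M ((n : ZMod r) + 1))) := by
        rw [spanImageSmul, map_pow, ← Function.iterate_succ_apply' σ (n - 1) d,
          show Nat.succ (n - 1) = n from by omega, Submodule.top_coe, Set.image_univ,
          hgen _ hne]
      calc ((⇑σ)^[n] d) • (⊤ : Submodule A (M ((n : ZMod r) + 1)))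
          = ((⇑σ)^[n] d) ^ 1 • ⊤ := by rw [pow_one]
        _ ≤ ((⇑σ)^[n] d) ^ (w - n) • ⊤ := smulPowLe _ (by omega) ⊤
        _ = _ := hkey.symm
        _ ≤ Submodule.span A (F (n : ZMod r) '' ↑(Nt (n : ZMod r))) := by
            apply Submodule.span_mono
            apply Set.image_mono
            exact SetLike.coe_subset_coe.mpr (h1 ▸ le_sup_right)
    · -- middle case: 1 ≤ n ≤ r - 2
      have h2 := hNi (n + 1) (by omega) (by omega)
      rw [hcast, Nat.add_sub_cancel] at h2
      have hP := hPsucc n (by omega)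
      have hS : Submodule.span A (F (n : ZMod r) '' ↑(Nt (n : ZMod r)))
          = P ((n : ZMod r) + 1) ⊔
            ((⇑σ)^[n] d) ^ (w - n) • (⊤ : Submodule A (M ((n : ZMod r) + 1))) := by
        rw [h1, spanImageSup, spanImageSmul, ← hP, map_pow,
          ← Function.iterate_succ_apply' σ (n - 1) d, show Nat.succ (n - 1) = n from by omega,
          Submodule.top_coe, Set.image_univ, hgen _ hne]
      rw [hS, h2]
      constructor
      · exact sup_le_sup le_rfl (smulPowLe _ (by omega) ⊤)
      · rw [Submodule.smul_sup']
        apply sup_le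
        · exact le_trans (smulLeSelf _ _) le_sup_left
        · calc ((⇑σ)^[n] d) • ((⇑σ)^[n] d) ^ (w - (n + 1)) •
              (⊤ : Submodule A (M ((n : ZMod r) + 1)))
              = ((⇑σ)^[n] d) ^ (w - (n + 1) + 1) • ⊤ := by rw [← mul_smul, ← pow_succ']
            _ ≤ ((⇑σ)^[n] d) ^ (w - n) • ⊤ := smulPowLe _ (by omega) ⊤
            _ ≤ _ := le_sup_right
end

section
/- Let A be a commutative ring, σ : A → A a ring endomorphism, d ∈ A with σ(d) a non-zero-divisor in A, N a natural number, and let m, n : Fin N → ℤ be monotone (non-decreasing) weight vectors. Suppose an N×N matrix k over A satisfies the Nygaard condition for (d, m+n), and suppose X is the μ-twist of k at d, i.e. d^{max(m j − m i, 0)} · (X i j) = d^{max(m i − m j, 0)} · σ(k i j) for all i, j. Then X satisfies the Nygaard condition for (σ(d), n): for all i, j, σ(d)^{max(n j − n i, 0)} divides σ(X i j). (This is part (ii) of the paper's Lemma on display groups: Φ^μ_d(GL_N^{μ+η}(A,d)) ⊆ GL_N^{η}(A, σ(d)).) -/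
/-- An `N×N` matrix `k` over `A` satisfies the **Nygaard condition** for `(d, m)` if
for all `i, j` the element `σ (k i j)` is divisible by `d ^ max (m j - m i) 0`.
This is the defining condition of the prismatic display group `GL_N^μ(A,(d))` for the
diagonal cocharacter `μ(z) = diag (z^(m 1), …, z^(m N))`. -/
def NygaardCond {A : Type*} [CommRing A] (σ : A →+* A) (d : A) {N : ℕ}
    (m : Fin N → ℤ) (k : Matrix (Fin N) (Fin N) A) : Prop :=
  ∀ i j, d ^ (m j - m i).toNat ∣ σ (k i j)

/-- A matrix `X` over `A` is the **μ-twist** of `k` at `d` (for weights `m`) if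
`d ^ max (m j - m i) 0 * X i j = d ^ max (m i - m j) 0 * σ (k i j)` for all `i, j`;
when `d` is a non-zero-divisor this characterizes `X = μ(d) σ(k) μ(d)⁻¹ = Φ^μ_d(k)`. -/
def IsTwist {A : Type*} [CommRing A] (σ : A →+* A) (d : A) {N : ℕ}
    (m : Fin N → ℤ) (k X : Matrix (Fin N) (Fin N) A) : Prop :=
  ∀ i j, d ^ (m j - m i).toNat * X i j = d ^ (m i - m j).toNat * σ (k i j)

/-- Part (ii) of the Lemma on display groups:
`Φ^μ_d(GL_N^{μ+η}(A,d)) ⊆ GL_N^{η}(A, σ(d))` for monotone weight vectors. -/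
theorem twist_nygaard {A : Type*} [CommRing A] (σ : A →+* A) (d : A)
    (hσd : σ d ∈ nonZeroDivisors A) {N : ℕ}
    (m n : Fin N → ℤ) (hm : Monotone m) (hn : Monotone n)
    (k X : Matrix (Fin N) (Fin N) A)
    (hk : NygaardCond σ d (fun j => m j + n j) k)
    (hX : IsTwist σ d m k X) :
    NygaardCond σ (σ d) n X := by
  intro i j
  rcases le_total j i with hji | hij
  · have : (n j - n i).toNat = 0 := Int.toNat_of_nonpos (by linarith [hn hji])
    simp [this]
  · have hmn : m i ≤ m j := hm hij
    have hnn : n i ≤ n j := hn hij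
    obtain ⟨u, hu⟩ := hk i j
    have hb : (m i - m j).toNat = 0 := Int.toNat_of_nonpos (by linarith)
    have hc : ((m j + n j) - (m i + n i)).toNat = (m j - m i).toNat + (n j - n i).toNat := by
      rw [← Int.toNat_add (by linarith) (by linarith)]; ring_nf
    have hXij := hX i j
    rw [hb, pow_zero, one_mul] at hXij
    have := congrArg σ hXij
    rw [map_mul, map_pow] at this
    have hu' := congrArg σ hu
    simp only [hc] at hu'
    rw [map_mul, map_pow, pow_add, mul_assoc] at hu'
    have key : σ d ^ (m j - m i).toNat * σ (X i j)
        = σ d ^ (m j - m i).toNat * (σ d ^ (n j - n i).toNat * σ u) := by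
      rw [this, hu']
    have := mul_cancel_left_mem_nonZeroDivisors (pow_mem hσd _) |>.mp key
    exact ⟨σ u, this⟩
end

section
/- Let A be a commutative ring, σ : A → A a ring endomorphism, d ∈ A with σ(d) a non-zero-divisor in A, N a natural number, and let m, n : Fin N → ℤ be monotone (non-decreasing) weight vectors. Let k be an N×N matrix over A. Suppose X is the μ-twist of k at d (for weights m), Y is the η-twist of X at σ(d) (for weights n), and Z is the (μ+η)-twist of k at d (for weights m+n). Then Y i j = σ(Z i j) for all i, j; that is, Φ^η_{σ(d)} ∘ Φ^μ_d = σ ∘ Φ^{μ+η}_d. (This is part (iii) of the paper's Lemma on display groups.) -/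
/-- Part (iii) of the Lemma on display groups:
`Φ^η_{σ(d)} ∘ Φ^μ_d = σ ∘ Φ^{μ+η}_d` for monotone weight vectors. -/
theorem twist_twist_eq_sigma_twist {A : Type*} [CommRing A] (σ : A →+* A) (d : A)
    (hσd : σ d ∈ nonZeroDivisors A) {N : ℕ}
    (m n : Fin N → ℤ) (hm : Monotone m) (hn : Monotone n)
    (k X Y Z : Matrix (Fin N) (Fin N) A)
    (hX : IsTwist σ d m k X)
    (hY : IsTwist σ (σ d) n X Y)
    (hZ : IsTwist σ d (fun j => m j + n j) k Z) :
    ∀ i j, Y i j = σ (Z i j) := by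
  intro i j
  have hXij := hX i j
  have hYij := hY i j
  have hZij := hZ i j
  simp only [] at hZij
  rcases le_total i j with h | h
  · have hm' := hm h
    have hn' := hn h
    have h1 : (m i - m j).toNat = 0 := by omega
    have h2 : (n i - n j).toNat = 0 := by omega
    have h3 : (m i + n i - (m j + n j)).toNat = 0 := by omega
    have h4 : (m j + n j - (m i + n i)).toNat = (m j - m i).toNat + (n j - n i).toNat := by omega
    rw [h1, pow_zero, one_mul] at hXij
    rw [h2, pow_zero, one_mul] at hYij
    rw [h3, h4, pow_zero, one_mul] at hZij
    have hcancel := mul_cancel_left_mem_nonZeroDivisors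
      (pow_mem hσd ((m j - m i).toNat + (n j - n i).toNat))
      (y := σ (Z i j)) (x := Y i j)
    refine hcancel.mp ?_
    have e1 : σ d ^ ((m j - m i).toNat + (n j - n i).toNat) * Y i j
        = σ d ^ (m j - m i).toNat * σ (X i j) := by rw [← hYij]; ring
    have e2 : σ d ^ (m j - m i).toNat * σ (X i j) = σ (σ (k i j)) := by
      rw [← map_pow, ← map_mul, hXij]
    have e3 : σ d ^ ((m j - m i).toNat + (n j - n i).toNat) * σ (Z i j)
        = σ (σ (k i j)) := by rw [← map_pow, ← map_mul, hZij]
    rw [e1, e2, e3]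
  · have hm' := hm h
    have hn' := hn h
    have h1 : (m j - m i).toNat = 0 := by omega
    have h2 : (n j - n i).toNat = 0 := by omega
    have h3 : (m j + n j - (m i + n i)).toNat = 0 := by omega
    have h4 : (m i + n i - (m j + n j)).toNat = (m i - m j).toNat + (n i - n j).toNat := by omega
    rw [h1, pow_zero, one_mul] at hXij
    rw [h2, pow_zero, one_mul] at hYij
    rw [h3, h4, pow_zero, one_mul] at hZij
    rw [hYij, hXij, hZij, map_mul, map_mul, map_pow, map_pow, pow_add]
    ring
end

section
/- Let A be a commutative ring, σ : A → A a ring endomorphism, d ∈ A a non-zero-divisor, N a natural number, and m : Fin N → ℤ a weight vector. If an N×N matrix k over A satisfies the Nygaard condition for (d, m), then there exists a unique matrix X over A which is the μ-twist of k at d, i.e. satisfying d^{max(m j − m i, 0)} · (X i j) = d^{max(m i − m j, 0)} · σ(k i j) for all i, j; moreover det X = σ(det k). In particular, if k is invertible over A then so is X. (This is the well-definedness of the display map Φ^μ_d : GL_N^μ(A,(d)) → GL_N(A), k ↦ μ(d)σ(k)μ(d)^{−1}, i.e. the claim that Φ^μ_d(k) in fact lies in GL_N(A).) -/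
theorem aux_cancel {A : Type*} [CommRing A] {d : A} (hd : d ∈ nonZeroDivisors A)
    (n : ℕ) {x y : A} (h : d ^ n * x = d ^ n * y) : x = y :=
  (mul_cancel_left_mem_nonZeroDivisors (pow_mem hd n)).mp h

/-- Well-definedness of the display map `Φ^μ_d : GL_N^μ(A,(d)) → GL_N(A)`:
if `d` is a non-zero-divisor and `k` satisfies the Nygaard condition for `(d, m)`,
then there is a unique μ-twist `X` of `k` at `d`; moreover `det X = σ (det k)`, and
if `k` is invertible then so is `X`. -/
theorem twist_existsUnique_det {A : Type*} [CommRing A] (σ : A →+* A) (d : A)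
    (hd : d ∈ nonZeroDivisors A) {N : ℕ}
    (m : Fin N → ℤ) (k : Matrix (Fin N) (Fin N) A)
    (hk : NygaardCond σ d m k) :
    (∃! X : Matrix (Fin N) (Fin N) A, IsTwist σ d m k X) ∧
    ∀ X : Matrix (Fin N) (Fin N) A, IsTwist σ d m k X →
      X.det = σ k.det ∧ (IsUnit k → IsUnit X) := by
  classical
  have hX : ∀ i j, σ (k i j) = d ^ (m j - m i).toNat * (hk i j).choose :=
    fun i j => (hk i j).choose_spec
  set X0 : Matrix (Fin N) (Fin N) A :=
    Matrix.of fun i j => d ^ (m i - m j).toNat * (hk i j).choose with hX0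
  have hT : IsTwist σ d m k X0 := by
    intro i j
    show d ^ (m j - m i).toNat * (d ^ (m i - m j).toNat * (hk i j).choose) = _
    rw [mul_left_comm]
    exact congrArg _ (hX i j).symm
  have uniq : ∀ Y Z, IsTwist σ d m k Y → IsTwist σ d m k Z → Y = Z := by
    intro Y Z hY hZ
    ext i j
    exact aux_cancel hd _ ((hY i j).trans (hZ i j).symm)
  have hdet : ∀ X, IsTwist σ d m k X → X.det = σ k.det := by
    intro X hXt
    set P : Equiv.Perm (Fin N) → ℕ := fun τ => ∑ i, (m i - m (τ i)).toNat with hP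
    have key : ∀ τ : Equiv.Perm (Fin N),
        d ^ P τ * ∏ i, X (τ i) i = d ^ P τ * ∏ i, σ (k (τ i) i) := by
      intro τ
      have hsum : (∑ i, (m (τ i) - m i).toNat) = P τ := by
        have hzero : ∑ i, (m i - m (τ i)) = 0 := by
          rw [Finset.sum_sub_distrib, Equiv.sum_comp τ m, sub_self]
        have : (∑ i, ((m i - m (τ i)).toNat : ℤ))
            = ∑ i, ((m (τ i) - m i).toNat : ℤ) := by
          have h1 : ∀ i : Fin N, ((m i - m (τ i)).toNat : ℤ)
              = ((m (τ i) - m i).toNat : ℤ) + (m i - m (τ i)) := by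
            intro i
            have := Int.toNat_sub_toNat_neg (m i - m (τ i))
            rw [neg_sub] at this
            linarith
          rw [Finset.sum_congr rfl fun i _ => h1 i, Finset.sum_add_distrib, hzero,
            add_zero]
        exact_mod_cast this.symm
      calc d ^ P τ * ∏ i, X (τ i) i
          = ∏ i, (d ^ (m i - m (τ i)).toNat * X (τ i) i) := by
            rw [Finset.prod_mul_distrib, Finset.prod_pow_eq_pow_sum]
        _ = ∏ i, (d ^ (m (τ i) - m i).toNat * σ (k (τ i) i)) :=
            Finset.prod_congr rfl fun i _ => hXt (τ i) i
        _ = d ^ P τ * ∏ i, σ (k (τ i) i) := by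
            rw [Finset.prod_mul_distrib, Finset.prod_pow_eq_pow_sum, hsum]
    set T : ℕ := Finset.univ.sup P with hTdef
    have key2 : ∀ τ : Equiv.Perm (Fin N),
        d ^ T * ∏ i, X (τ i) i = d ^ T * ∏ i, σ (k (τ i) i) := by
      intro τ
      have hle : P τ ≤ T := Finset.le_sup (Finset.mem_univ τ)
      have : d ^ T = d ^ (T - P τ) * d ^ P τ := by
        rw [← pow_add, Nat.sub_add_cancel hle]
      rw [this, mul_assoc, mul_assoc, key τ]
    apply aux_cancel hd T
    rw [RingHom.map_det, Matrix.det_apply, Matrix.det_apply, Finset.mul_sum,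
      Finset.mul_sum]
    refine Finset.sum_congr rfl fun τ _ => ?_
    rw [mul_smul_comm, mul_smul_comm]
    congr 1
    simpa [Matrix.map_apply] using key2 τ
  refine ⟨⟨X0, hT, fun Y hY => uniq Y X0 hY hT⟩, fun X hXt => ⟨hdet X hXt, ?_⟩⟩
  intro hu
  rw [Matrix.isUnit_iff_isUnit_det] at hu ⊢
  rw [hdet X hXt]
  exact hu.map σ
end

section
/- Let A be a commutative ring, σ : A → A a ring endomorphism, d ∈ A, N a natural number, and m : Fin N → ℤ a weight vector. The set of invertible N×N matrices over A satisfying the Nygaard condition for (d, m) is a subgroup of GL_N(A): (1) the identity matrix satisfies the condition; (2) if k and k' satisfy the condition then so does the product k·k'; (3) if k is invertible and satisfies the condition then so does k^{−1}. (This is the claim that the prismatic display group GL_N^μ(A,(d)) is a subgroup of GL_N(A); no monotonicity assumption on m is needed.) -/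
/-- Key divisibility lemma for determinants with weighted rows and columns. -/
lemma nygaard_det_dvd {A : Type*} [CommRing A] (d : A) {n : ℕ} (r c : Fin n → ℤ)
    (M : Matrix (Fin n) (Fin n) A) (h : ∀ i j, d ^ (c j - r i).toNat ∣ M i j) :
    d ^ ((∑ j, c j) - ∑ i, r i).toNat ∣ M.det := by
  rw [Matrix.det_apply]
  refine Finset.dvd_sum fun π _ => ?_
  rw [Units.smul_def, zsmul_eq_mul]
  refine Dvd.dvd.mul_left ?_ _
  have key : d ^ ((∑ j, c j) - ∑ i, r i).toNat ∣ d ^ (∑ i, (c i - r (π i)).toNat) := by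
    apply pow_dvd_pow
    have h1 : (∑ j, c j) - ∑ i, r i = ∑ i, (c i - r (π i)) := by
      rw [Finset.sum_sub_distrib]
      congr 1
      exact (Equiv.sum_comp π r).symm
    rw [h1, Int.toNat_le]
    push_cast
    exact Finset.sum_le_sum fun i _ => Int.self_le_toNat _
  refine key.trans ?_
  rw [← Finset.prod_pow_eq_pow_sum]
  exact Finset.prod_dvd_prod_of_dvd _ _ fun i _ => h _ i

/-- The prismatic display group `GL_N^μ(A,(d))` is a subgroup of `GL_N(A)`:
the identity satisfies the Nygaard condition, the condition is closed under
products, and it is closed under inverses of invertible matrices. -/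
theorem nygaard_subgroup {A : Type*} [CommRing A] (σ : A →+* A) (d : A) {N : ℕ}
    (m : Fin N → ℤ) :
    NygaardCond σ d m (1 : Matrix (Fin N) (Fin N) A) ∧
    (∀ k k' : Matrix (Fin N) (Fin N) A,
      NygaardCond σ d m k → NygaardCond σ d m k' → NygaardCond σ d m (k * k')) ∧
    (∀ k : Matrix (Fin N) (Fin N) A,
      IsUnit k → NygaardCond σ d m k → NygaardCond σ d m k⁻¹) := by
  refine ⟨?_, ?_, ?_⟩
  · intro i j
    by_cases hij : i = j
    · subst hij; simp [Matrix.one_apply]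
    · simp [Matrix.one_apply, hij]
  · intro k k' hk hk' i j
    simp only [Matrix.mul_apply, map_sum]
    refine Finset.dvd_sum fun l _ => ?_
    rw [map_mul]
    have h1 := hk i l
    have h2 := hk' l j
    have : d ^ (m j - m i).toNat ∣ d ^ ((m l - m i).toNat + (m j - m l).toNat) := by
      apply pow_dvd_pow
      omega
    refine this.trans ?_
    rw [pow_add]
    exact mul_dvd_mul h1 h2
  · intro k hk hN i j
    rw [Matrix.inv_def]
    simp only [Matrix.smul_apply, smul_eq_mul, map_mul]
    refine Dvd.dvd.mul_left ?_ _
    have hadj : σ (k.adjugate i j) = (σ.mapMatrix k).adjugate i j := by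
      rw [← RingHom.map_adjugate]; rfl
    rw [hadj, Matrix.adjugate_apply]
    have := nygaard_det_dvd d (Function.update m j (m i)) m
      ((σ.mapMatrix k).updateRow j (Pi.single i 1)) ?_
    · convert this using 2
      rw [Finset.sum_update_of_mem (Finset.mem_univ j)]
      have hj : m j + ∑ x ∈ Finset.univ.erase j, m x = ∑ x, m x :=
        Finset.add_sum_erase _ m (Finset.mem_univ j)
      rw [Finset.sdiff_singleton_eq_erase]
      omega
    · intro a b
      by_cases haj : a = j
      · subst haj
        rw [Matrix.updateRow_self]
        by_cases hbi : b = i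
        · subst hbi
          simp [Function.update_self]
        · simp [Pi.single_apply, hbi]
      · rw [Matrix.updateRow_ne haj, Function.update_of_ne haj]
        exact hN a b
end

section
/- Let A be a commutative ring, σ : A → A a ring endomorphism, d ∈ A a non-zero-divisor, N a natural number, and m : Fin N → ℤ a weight vector. Suppose k and k' are N×N matrices over A satisfying the Nygaard condition for (d, m), and suppose X, X', X'' are the μ-twists at d of k, k', and the product k·k' respectively. Then X'' = X · X'. (This expresses that the display map Φ^μ_d : GL_N^μ(A,(d)) → GL_N(A), k ↦ μ(d)σ(k)μ(d)^{−1}, is multiplicative, which is needed for the Φ^μ-conjugation action defining banal graded prismatic displays.) -/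
private lemma twist_term {A : Type*} [CommRing A] (d : A)
    (hd : d ∈ nonZeroDivisors A) (a b c : ℤ) (x y u v : A)
    (hx : d ^ (c - a).toNat * x = d ^ (a - c).toNat * u)
    (hy : d ^ (b - c).toNat * y = d ^ (c - b).toNat * v)
    (hu : d ^ (c - a).toNat ∣ u) (hv : d ^ (b - c).toNat ∣ v) :
    d ^ (b - a).toNat * (x * y) = d ^ (a - b).toNat * (u * v) := by
  obtain ⟨u', hu'⟩ := hu
  obtain ⟨v', hv'⟩ := hv
  set s := (c - a).toNat + (b - c).toNat - (b - a).toNat with hs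
  have h1 : (c - a).toNat + (b - c).toNat = (b - a).toNat + s := by omega
  have h2 : (a - c).toNat + (c - b).toNat = (a - b).toNat + s := by omega
  have key : x * y = d ^ ((a - b).toNat + s) * (u' * v') := by
    have hpow : d ^ ((b - a).toNat + s) ∈ nonZeroDivisors A := pow_mem hd _
    apply (mul_cancel_left_mem_nonZeroDivisors hpow).mp
    calc d ^ ((b - a).toNat + s) * (x * y)
        = (d ^ (c - a).toNat * x) * (d ^ (b - c).toNat * y) := by
          rw [← h1, pow_add]; ring
      _ = (d ^ (a - c).toNat * u) * (d ^ (c - b).toNat * v) := by rw [hx, hy]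
      _ = d ^ ((a - c).toNat + (c - b).toNat) * (d ^ ((c - a).toNat + (b - c).toNat) * (u' * v')) := by
          rw [hu', hv', pow_add, pow_add]; ring
      _ = d ^ ((b - a).toNat + s) * (d ^ ((a - b).toNat + s) * (u' * v')) := by
          rw [h1, h2]; ring
  calc d ^ (b - a).toNat * (x * y)
      = d ^ ((b - a).toNat + (a - b).toNat + s) * (u' * v') := by
        rw [key, ← mul_assoc, ← pow_add]; ring_nf
    _ = d ^ (a - b).toNat * (u * v) := by
        rw [hu', hv']
        rw [show (b - a).toNat + (a - b).toNat + s
            = (a - b).toNat + ((c - a).toNat + (b - c).toNat) by omega]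
        rw [pow_add, pow_add]; ring

/-- Multiplicativity of the display map `Φ^μ_d`: if `X, X', X''` are the μ-twists at
`d` of `k`, `k'` and `k * k'` respectively, then `X'' = X * X'`. -/
theorem twist_mul {A : Type*} [CommRing A] (σ : A →+* A) (d : A)
    (hd : d ∈ nonZeroDivisors A) {N : ℕ}
    (m : Fin N → ℤ) (k k' X X' X'' : Matrix (Fin N) (Fin N) A)
    (hk : NygaardCond σ d m k) (hk' : NygaardCond σ d m k')
    (hX : IsTwist σ d m k X) (hX' : IsTwist σ d m k' X')
    (hX'' : IsTwist σ d m (k * k') X'') :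
    X'' = X * X' := by
  ext i j
  have hpow : d ^ (m j - m i).toNat ∈ nonZeroDivisors A := pow_mem hd _
  apply (mul_cancel_left_mem_nonZeroDivisors hpow).mp
  rw [hX'' i j]
  have : ∀ l, d ^ (m j - m i).toNat * (X i l * X' l j)
      = d ^ (m i - m j).toNat * (σ (k i l) * σ (k' l j)) := fun l =>
    twist_term d hd (m i) (m j) (m l) (X i l) (X' l j) (σ (k i l)) (σ (k' l j))
      (hX i l) (hX' l j) (hk i l) (hk' l j)
  simp only [Matrix.mul_apply, map_sum, map_mul, Finset.mul_sum, this]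
end

section
/- Let m and s be positive natural numbers with m odd, set r = m·s, and fix g ∈ ℤ/rℤ. For x ∈ ℤ/rℤ write x.val ∈ {0, …, r−1} for its standard representative. Then for every w ∈ ℤ/rℤ there is exactly one w' ∈ ℤ/rℤ such that (w − w').val = ((w' − 1 − g).val mod m). In particular there is at most one such w', so the sparse datum with Γ = {g, g+m, g+2m, …, g+(s−1)m} ⊆ ℤ/rℤ is regular. -/
private lemma key_mod (r m : ℕ) [NeZero r] (hm : m ∣ r) (c : ZMod r) (t : ℕ) (ht : t < r) :
    ((c - (t : ZMod r)).val + t) % m = c.val % m := by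
  conv_rhs => rw [show c = (c - (t : ZMod r)) + (t : ZMod r) by ring]
  rw [ZMod.val_add, Nat.mod_mod_of_dvd _ hm, ZMod.val_cast_of_lt ht]

/-- If `m` is odd, `s > 0`, `r = m * s` and `Γ = {g, g+m, …, g+(s-1)m} ⊆ ℤ/rℤ`
(so all intervals between consecutive elements of `Γ` have the same odd length `m`,
and `t⁺(x) = (x - g).val % m`), then for every `w ∈ ℤ/rℤ` there is exactly one
`w' ∈ ℤ/rℤ` with `(w - w').val = ((w' - 1 - g).val % m)`; in particular the sparse
datum with support `Γ` is regular. -/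
theorem odd_equal_gaps_regular (m s : ℕ) (hm : 0 < m) (hs : 0 < s) (hodd : Odd m)
    (r : ℕ) (hr : r = m * s) (g : ZMod r) :
    ∀ w : ZMod r, ∃! w' : ZMod r, (w - w').val = (w' - 1 - g).val % m := by
  subst hr
  haveI : NeZero (m * s) := ⟨by positivity⟩
  intro w
  set c : ZMod (m * s) := w - 1 - g with hc
  set t : ℕ := ((m + 1) / 2 * c.val) % m with htdef
  have htm : t < m := Nat.mod_lt _ hm
  have hmr : m ≤ m * s := Nat.le_mul_of_pos_right m hs
  have htr : t < m * s := lt_of_lt_of_le htm hmr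
  have hdvd : m ∣ m * s := dvd_mul_right m s
  have h2 : 2 * ((m + 1) / 2) = m + 1 := by
    obtain ⟨k, hk⟩ := hodd; omega
  have h2t : 2 * t ≡ c.val [MOD m] := by
    calc 2 * t ≡ 2 * ((m + 1) / 2 * c.val) [MOD m] :=
          Nat.ModEq.mul_left 2 (Nat.mod_modEq _ m)
      _ = (m + 1) * c.val := by rw [← mul_assoc, h2]
      _ ≡ 1 * c.val [MOD m] := Nat.ModEq.mul_right _ (by simp [Nat.ModEq, Nat.add_mod])
      _ = c.val := one_mul _
  have hcop : Nat.gcd m 2 = 1 := Nat.Coprime.gcd_eq_one (Nat.coprime_comm.mp ((Nat.coprime_two_left).mpr hodd))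
  refine ⟨w - (t : ZMod (m * s)), ?_, ?_⟩
  · show (w - (w - (t : ZMod (m * s)))).val = (w - (t : ZMod (m * s)) - 1 - g).val % m
    have h1 : w - (w - (t : ZMod (m * s))) = (t : ZMod (m * s)) := by ring
    have h2' : w - (t : ZMod (m * s)) - 1 - g = c - (t : ZMod (m * s)) := by rw [hc]; ring
    rw [h1, h2', ZMod.val_cast_of_lt htr]
    have hk := key_mod (m * s) m hdvd c t htr
    have : ((c - (t : ZMod (m * s))).val + t) % m = (t + t) % m := by
      rw [hk]; have := h2t.symm; rw [two_mul] at this; exact this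
    have hmodeq : (c - (t : ZMod (m * s))).val ≡ t [MOD m] :=
      Nat.ModEq.add_right_cancel' t this
    have hmm : (c - (t : ZMod (m * s))).val % m = t % m := hmodeq
    rw [hmm, Nat.mod_eq_of_lt htm]
  · intro y hy
    set u : ℕ := (w - y).val with hu
    have hum : u < m := by rw [hy]; exact Nat.mod_lt _ hm
    have hur : u < m * s := lt_of_lt_of_le hum hmr
    have hwy : w - y = (u : ZMod (m * s)) := by
      rw [hu, ZMod.natCast_val, ZMod.cast_id]
    have hyw : y = w - (u : ZMod (m * s)) := by rw [← hwy]; ring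
    have hyc : y - 1 - g = c - (u : ZMod (m * s)) := by rw [hyw, hc]; ring
    have hyu : (c - (u : ZMod (m * s))).val % m = u := by rw [← hyc, ← hy]
    have h2u : 2 * u ≡ c.val [MOD m] := by
      have hk := key_mod (m * s) m hdvd c u hur
      have : ((c - (u : ZMod (m * s))).val + u) % m = (u + u) % m := by
        have h1 : (c - (u : ZMod (m * s))).val ≡ u [MOD m] := by
          have : (c - (u : ZMod (m * s))).val % m = u % m := by
            rw [hyu, Nat.mod_eq_of_lt hum]
          exact this
        exact h1.add_right u
      have : (u + u) % m = c.val % m := by rw [← this, hk]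
      calc 2 * u = u + u := two_mul u
        _ ≡ c.val [MOD m] := this
    have hut : u ≡ t [MOD m] :=
      Nat.ModEq.cancel_left_of_coprime hcop (h2u.trans h2t.symm)
    have hut' : u = t := by
      have : u % m = t % m := hut
      rwa [Nat.mod_eq_of_lt hum, Nat.mod_eq_of_lt htm] at this
    rw [hyw, hut']
end
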